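/- Let A, B be abelian groups and π : B → A a surjective homomorphism. Every polynomial map f : ℤⁿ → A of degree at most k lifts to a polynomial map g : ℤⁿ → B of degree at most k with π ∘ g = f. -/

import Mathlib

/-- Additive difference operator `Δ_t f (x) = f (x+t) - f x`. -/
def addDeriv {H A : Type*} [AddCommGroup H] [AddCommGroup A] (f : H → A) (t : H) : H → A :=
  fun x => f (x + t) - f x

/-- `f : H → A` is a polynomial map of degree at most `k`: all `(k+1)`-fold
difference operators annihilate it. -/
def IsPolyMap {H A : Type*} [AddCommGroup H] [AddCommGroup A] (k : ℕ) (f : H → A) : Prop :=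
  ∀ t : Fin (k + 1) → H, ∀ x, ((List.ofFn t).foldl addDeriv f) x = 0

section Basic

variable {H A : Type*} [AddCommGroup H] [AddCommGroup A]

lemma addDeriv_add (f g : H → A) (t : H) :
    addDeriv (fun x => f x + g x) t = fun x => addDeriv f t x + addDeriv g t x := by
  funext x; simp only [addDeriv]; abel

lemma addDeriv_neg (f : H → A) (t : H) :
    addDeriv (fun x => - f x) t = fun x => - addDeriv f t x := by
  funext x; simp only [addDeriv]; abel

lemma addDeriv_zero_fun (t : H) :
    addDeriv (fun _ : H => (0 : A)) t = fun _ => (0 : A) := by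
  funext x; simp [addDeriv]

lemma foldl_addDeriv_add (l : List H) (f g : H → A) :
    l.foldl addDeriv (fun x => f x + g x)
      = fun x => l.foldl addDeriv f x + l.foldl addDeriv g x := by
  induction l generalizing f g with
  | nil => rfl
  | cons t l ih =>
      simp only [List.foldl_cons, addDeriv_add]
      rw [show addDeriv f t = fun x => addDeriv f t x from rfl,
        show addDeriv g t = fun x => addDeriv g t x from rfl] at *
      exact ih _ _

lemma foldl_addDeriv_neg (l : List H) (f : H → A) :
    l.foldl addDeriv (fun x => - f x) = fun x => - l.foldl addDeriv f x := by
  induction l generalizing f with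
  | nil => rfl
  | cons t l ih =>
      simp only [List.foldl_cons, addDeriv_neg]
      exact ih _

lemma foldl_addDeriv_zero (l : List H) :
    l.foldl addDeriv (fun _ : H => (0 : A)) = fun _ => (0 : A) := by
  induction l with
  | nil => rfl
  | cons t l ih => simp only [List.foldl_cons, addDeriv_zero_fun]; exact ih

lemma IsPolyMap.add {k : ℕ} {f g : H → A} (hf : IsPolyMap k f) (hg : IsPolyMap k g) :
    IsPolyMap k (fun x => f x + g x) := by
  intro t x
  rw [foldl_addDeriv_add]
  simp only []
  rw [hf t x, hg t x, add_zero]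

lemma IsPolyMap.neg {k : ℕ} {f : H → A} (hf : IsPolyMap k f) :
    IsPolyMap k (fun x => - f x) := by
  intro t x
  rw [foldl_addDeriv_neg]
  simp only []
  rw [hf t x, neg_zero]

lemma IsPolyMap.zero {k : ℕ} : IsPolyMap k (fun _ : H => (0 : A)) := by
  intro t x
  rw [foldl_addDeriv_zero]

lemma isPolyMap_congr {k : ℕ} {f g : H → A} (h : ∀ x, f x = g x) (hf : IsPolyMap k f) :
    IsPolyMap k g := by
  have : g = f := by funext x; exact (h x).symm
  rw [this]; exact hf

lemma IsPolyMap.sum {k : ℕ} {ι : Type*} (s : Finset ι) (F : ι → H → A)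
    (h : ∀ j ∈ s, IsPolyMap k (F j)) :
    IsPolyMap k (fun x => ∑ j ∈ s, F j x) := by
  classical
  induction s using Finset.induction_on with
  | empty => exact isPolyMap_congr (by simp) IsPolyMap.zero
  | insert a s hns ih =>
      refine isPolyMap_congr (g := fun x => ∑ j ∈ insert a s, F j x) ?_
        ((h a (Finset.mem_insert_self a s)).add (ih fun j hj => h j (Finset.mem_insert_of_mem hj)))
      intro x
      simp [Finset.sum_insert hns]

lemma isPolyMap_succ_iff {k : ℕ} {f : H → A} :
    IsPolyMap (k + 1) f ↔ ∀ t : H, IsPolyMap k (addDeriv f t) := by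
  constructor
  · intro h t u x
    have := h (Fin.cons t u) x
    rwa [List.ofFn_succ, Fin.cons_zero, List.foldl_cons] at this
    -- may need simp for Fin.cons_succ in ofFn
  · intro h t x
    rw [List.ofFn_succ, List.foldl_cons]
    exact h (t 0) (fun i => t i.succ) x

lemma IsPolyMap.addDeriv_poly {k : ℕ} {f : H → A} (hf : IsPolyMap (k + 1) f) (t : H) :
    IsPolyMap k (addDeriv f t) := (isPolyMap_succ_iff.1 hf) t

lemma isPolyMap_zero_apply {f : H → A} (hf : IsPolyMap 0 f) : ∀ x y, f x = f y := by
  intro x y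
  have h := hf (fun _ => y - x) x
  simp only [List.ofFn_succ, List.ofFn_zero, List.foldl_cons, List.foldl_nil, addDeriv] at h
  have : x + (y - x) = y := by abel
  rw [this] at h
  exact (sub_eq_zero.mp h).symm

end Basic

section More

variable {H H' A B : Type*} [AddCommGroup H] [AddCommGroup H'] [AddCommGroup A] [AddCommGroup B]

lemma addDeriv_shift (f : H → A) (c t : H) :
    addDeriv (fun x => f (x + c)) t = fun x => addDeriv f t (x + c) := by
  funext x; simp only [addDeriv]
  have : x + c + t = x + t + c := by abel
  rw [this]

lemma foldl_addDeriv_shift (l : List H) (f : H → A) (c : H) :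
    l.foldl addDeriv (fun x => f (x + c)) = fun x => List.foldl addDeriv f l (x + c) := by
  induction l generalizing f with
  | nil => rfl
  | cons t l ih =>
      simp only [List.foldl_cons, addDeriv_shift]
      exact ih (addDeriv f t)

lemma IsPolyMap.shift {k : ℕ} {f : H → A} (hf : IsPolyMap k f) (c : H) :
    IsPolyMap k (fun x => f (x + c)) := by
  intro t x
  rw [foldl_addDeriv_shift]
  simp only []
  exact hf t (x + c)

lemma addDeriv_comp (f : H → A) (φ : H' → H) (hφ : ∀ a b, φ (a + b) = φ a + φ b) (t : H') :
    addDeriv (fun x => f (φ x)) t = fun x => addDeriv f (φ t) (φ x) := by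
  funext x; simp only [addDeriv, hφ]

lemma foldl_addDeriv_comp (l : List H') (f : H → A) (φ : H' → H)
    (hφ : ∀ a b, φ (a + b) = φ a + φ b) :
    l.foldl addDeriv (fun x => f (φ x)) = fun x => (l.map φ).foldl addDeriv f (φ x) := by
  induction l generalizing f with
  | nil => rfl
  | cons t l ih =>
      simp only [List.foldl_cons, List.map_cons, addDeriv_comp f φ hφ]
      exact ih (addDeriv f (φ t))

lemma IsPolyMap.comp_additive {k : ℕ} {f : H → A} (hf : IsPolyMap k f) (φ : H' → H)
    (hφ : ∀ a b, φ (a + b) = φ a + φ b) :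
    IsPolyMap k (fun x => f (φ x)) := by
  intro t x
  rw [foldl_addDeriv_comp _ _ _ hφ]
  simp only []
  rw [List.map_ofFn]
  exact hf (fun i => φ (t i)) (φ x)

lemma IsPolyMap.const {k : ℕ} (a : A) : IsPolyMap k (fun _ : H => a) := by
  intro t x
  rw [List.ofFn_succ, List.foldl_cons]
  have : addDeriv (fun _ : H => a) (t 0) = fun _ : H => (0 : A) := by
    funext y; simp [addDeriv]
  rw [this, foldl_addDeriv_zero]

/-- Product of an integer-valued polynomial map and a `B`-valued polynomial map. -/
lemma isPolyMap_smul_mul : ∀ (N p q : ℕ), p + q = N → ∀ (c : H → ℤ) (h : H → B),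
    IsPolyMap p c → IsPolyMap q h → IsPolyMap (p + q) (fun x => c x • h x) := by
  intro N
  induction N with
  | zero =>
      intro p q hpq c h hc hh
      obtain ⟨hp, hq⟩ : p = 0 ∧ q = 0 := by omega
      subst hp; subst hq
      intro t x
      rw [List.ofFn_succ, List.foldl_cons]
      have : addDeriv (fun x => c x • h x) (t 0) = fun _ : H => (0 : B) := by
        funext y
        simp only [addDeriv]
        rw [isPolyMap_zero_apply hc (y + t 0) y, isPolyMap_zero_apply hh (y + t 0) y, sub_self]
      rw [this, foldl_addDeriv_zero]
  | succ N ih =>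
      intro p q hpq c h hc hh
      rw [show p + q = N + 1 from hpq, isPolyMap_succ_iff]
      intro t
      have key : addDeriv (fun x => c x • h x) t
          = fun x => c (x + t) • addDeriv h t x + addDeriv c t x • h x := by
        funext x
        simp only [addDeriv, smul_sub, sub_smul]
        abel
      rw [key]
      have h1 : IsPolyMap N (fun x => c (x + t) • addDeriv h t x) := by
        rcases q with _ | q'
        · have : ∀ x, addDeriv h t x = 0 := by
            intro x
            simp only [addDeriv]
            rw [isPolyMap_zero_apply hh (x + t) x, sub_self]
          exact isPolyMap_congr (f := fun _ : H => (0:B))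
            (fun x => by rw [this x, smul_zero]) IsPolyMap.zero
        · have := ih p q' (by omega) (fun x => c (x + t)) (addDeriv h t)
            (hc.shift t) (hh.addDeriv_poly t)
          rw [show p + q' = N by omega] at this
          exact this
      have h2 : IsPolyMap N (fun x => addDeriv c t x • h x) := by
        rcases p with _ | p'
        · have : ∀ x, addDeriv c t x = 0 := by
            intro x
            simp only [addDeriv]
            rw [isPolyMap_zero_apply hc (x + t) x, sub_self]
          exact isPolyMap_congr (f := fun _ : H => (0:B))
            (fun x => by rw [this x, zero_smul]) IsPolyMap.zero
        · have := ih p' q (by omega) (addDeriv c t) h (hc.addDeriv_poly t) hh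
          rw [show p' + q = N by omega] at this
          exact this
      exact h1.add h2

lemma IsPolyMap.smul_mul {p q : ℕ} {c : H → ℤ} {h : H → B}
    (hc : IsPolyMap p c) (hh : IsPolyMap q h) : IsPolyMap (p + q) (fun x => c x • h x) :=
  isPolyMap_smul_mul (p + q) p q rfl c h hc hh

end More

section Choose

variable {H A : Type*} [AddCommGroup H] [AddCommGroup A]

lemma addDeriv_zero_vec (f : H → A) : addDeriv f 0 = fun _ => (0 : A) := by
  funext x; simp [addDeriv]

lemma addDeriv_add_vec (f : H → A) (a b : H) :
    addDeriv f (a + b) = fun x => addDeriv f a x + addDeriv f b (x + a) := by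
  funext x
  simp only [addDeriv]
  have : x + (a + b) = x + a + b := by abel
  rw [this]; abel

lemma addDeriv_neg_one (f : ℤ → A) :
    addDeriv f (-1) = fun x => - addDeriv f 1 (x + (-1)) := by
  funext x
  simp only [addDeriv]
  have : x + (-1) + 1 = x := by ring
  rw [this]; abel

lemma chFun_pascal (m : ℕ) :
    addDeriv (fun y : ℤ => Ring.choose y (m + 1)) 1 = fun y : ℤ => Ring.choose y m := by
  funext y
  simp only [addDeriv]
  rw [Ring.choose_succ_succ y m]
  abel

lemma isPolyMap_chFun : ∀ m : ℕ, IsPolyMap m (fun y : ℤ => Ring.choose y m) := by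
  intro m
  induction m with
  | zero =>
      have : (fun y : ℤ => Ring.choose y 0) = fun _ : ℤ => (1 : ℤ) := by
        funext y; rw [Ring.choose_zero_right]
      rw [this]
      exact IsPolyMap.const 1
  | succ m ih =>
      rw [isPolyMap_succ_iff]
      have hone : IsPolyMap m (addDeriv (fun y : ℤ => Ring.choose y (m + 1)) 1) := by
        rw [chFun_pascal]; exact ih
      have hnegone : IsPolyMap m (addDeriv (fun y : ℤ => Ring.choose y (m + 1)) (-1)) := by
        rw [addDeriv_neg_one]
        exact (hone.shift (-1)).neg
      intro a
      induction a using Int.induction_on with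
      | zero => rw [addDeriv_zero_vec]; exact IsPolyMap.zero
      | succ a iha =>
          rw [show ((a : ℤ) + 1) = (a : ℤ) + 1 from rfl, addDeriv_add_vec]
          exact iha.add (hone.shift (a : ℤ))
      | pred a iha =>
          rw [show (-(a : ℤ) - 1) = (-(a : ℤ)) + (-1) from by ring, addDeriv_add_vec]
          exact iha.add (hnegone.shift (-(a : ℤ)))

lemma isPolyMap_iterate_addDeriv (e : H) :
    ∀ (j p : ℕ) (f : H → A), IsPolyMap (j + p) f →
      IsPolyMap p ((fun h => addDeriv h e)^[j] f) := by
  intro j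
  induction j with
  | zero => intro p f hf; simpa using hf
  | succ j ih =>
      intro p f hf
      rw [Function.iterate_succ_apply]
      refine ih p (addDeriv f e) ?_
      exact (show IsPolyMap (j + p + 1) f by
        have : j + 1 + p = j + p + 1 := by omega
        rwa [this] at hf).addDeriv_poly e

end Choose

section Newton

variable {A : Type*} [AddCommGroup A] {n : ℕ}

lemma update_add_single (x : Fin n → ℤ) (i : Fin n) :
    Function.update (x + Pi.single i 1) i 0 = Function.update x i 0 := by
  funext j
  by_cases hj : j = i
  · subst hj; simp
  · simp [Function.update_apply, hj, Pi.single_apply, Ne.symm hj]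

lemma add_single_apply (x : Fin n → ℤ) (i : Fin n) :
    (x + Pi.single i 1 : Fin n → ℤ) i = x i + 1 := by
  simp

lemma update_add_smul_single (x : Fin n → ℤ) (i : Fin n) :
    Function.update x i 0 + (x i) • Pi.single i 1 = x := by
  funext j
  by_cases hj : j = i
  · subst hj; simp
  · simp [Function.update_apply, hj, Pi.single_apply, Ne.symm hj]

theorem newton (i : Fin n) : ∀ (m : ℕ) (f : (Fin n → ℤ) → A), IsPolyMap m f → ∀ x,
    f x = ∑ j ∈ Finset.range (m + 1), Ring.choose (x i) j •
      ((fun h => addDeriv h (Pi.single i 1))^[j] f) (Function.update x i 0) := by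
  intro m
  induction m with
  | zero =>
      intro f hf x
      rw [Finset.sum_range_one, Ring.choose_zero_right, one_smul, Function.iterate_zero_apply]
      exact isPolyMap_zero_apply hf x (Function.update x i 0)
  | succ m ih =>
      intro f hf x
      set e : Fin n → ℤ := Pi.single i 1 with he
      set F : (Fin n → ℤ) → A := fun y => ∑ j ∈ Finset.range (m + 2), Ring.choose (y i) j •
        ((fun h => addDeriv h e)^[j] f) (Function.update y i 0) with hF
      -- (a)
      have ha : ∀ y, F (y + e) - F y = f (y + e) - f y := by
        intro y
        have h1 : F (y + e) = ∑ j ∈ Finset.range (m + 2), Ring.choose (y i + 1) j •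
            ((fun h => addDeriv h e)^[j] f) (Function.update y i 0) := by
          have hupd : Function.update (y + e) i 0 = Function.update y i 0 := by
            rw [he]; exact update_add_single y i
          have happ : (y + e) i = y i + 1 := by rw [he]; exact add_single_apply y i
          rw [hF]
          simp only [hupd, happ]
        have h2 : F (y + e) - F y = ∑ j ∈ Finset.range (m + 2),
            (Ring.choose (y i + 1) j - Ring.choose (y i) j) •
            ((fun h => addDeriv h e)^[j] f) (Function.update y i 0) := by
          rw [h1, hF, ← Finset.sum_sub_distrib]
          congr 1
          funext j
          rw [sub_smul]
        rw [h2, Finset.sum_range_succ']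
        have h3 : (Ring.choose (y i + 1) 0 - Ring.choose (y i) 0) •
            ((fun h => addDeriv h e)^[0] f) (Function.update y i 0) = 0 := by
          rw [Ring.choose_zero_right, Ring.choose_zero_right, sub_self, zero_smul]
        rw [h3, add_zero]
        have h4 : ∀ j, Ring.choose (y i + 1) (j + 1) - Ring.choose (y i) (j + 1)
            = Ring.choose (y i) j := by
          intro j
          rw [Ring.choose_succ_succ]
          abel
        have h5 : ∑ j ∈ Finset.range (m + 1), (Ring.choose (y i + 1) (j + 1) -
              Ring.choose (y i) (j + 1)) •
              ((fun h => addDeriv h e)^[j + 1] f) (Function.update y i 0)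
            = ∑ j ∈ Finset.range (m + 1), Ring.choose (y i) j •
              ((fun h => addDeriv h e)^[j] (addDeriv f e)) (Function.update y i 0) := by
          refine Finset.sum_congr rfl fun j _ => ?_
          rw [h4, Function.iterate_succ_apply]
        rw [h5, ← ih (addDeriv f e) (hf.addDeriv_poly e) y]
        rfl
      -- (b)
      have hb : ∀ y, F (Function.update y i 0) = f (Function.update y i 0) := by
        intro y
        rw [hF]
        simp only [Function.update_idem, Function.update_self]
        rw [Finset.sum_eq_single 0]
        · rw [Ring.choose_zero_right, one_smul, Function.iterate_zero_apply]
        · intro j _ hj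
          rw [Ring.choose_zero_pos ℤ (Nat.pos_of_ne_zero hj), zero_smul]
        · intro h; exact absurd (Finset.mem_range.mpr (by omega)) h
      -- (c)
      set R : (Fin n → ℤ) → A := fun y => f y - F y with hR
      have hR1 : ∀ y, R (y + e) = R y := by
        intro y
        refine sub_eq_zero.mp ?_
        have hdiff : R (y + e) - R y = (f (y + e) - f y) - (F (y + e) - F y) := by
          simp only [hR]; abel
        rw [hdiff, ha y, sub_self]
      have hR1' : ∀ y, R (y - e) = R y := by
        intro y
        have := hR1 (y - e)
        rw [sub_add_cancel] at this
        exact this.symm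
      have hR2 : ∀ (a : ℤ) (y), R (y + a • e) = R y := by
        intro a
        induction a using Int.induction_on with
        | zero => intro y; rw [zero_smul, add_zero]
        | succ a iha =>
            intro y
            have : y + ((a : ℤ) + 1) • e = (y + (a : ℤ) • e) + e := by
              rw [add_smul, one_smul]; abel
            rw [this, hR1, iha]
        | pred a iha =>
            intro y
            have : y + (-(a : ℤ) - 1) • e = (y + (-(a : ℤ)) • e) - e := by
              rw [sub_smul, one_smul]; abel
            rw [this, hR1', iha]
      have : R x = 0 := by
        have hx : x = Function.update x i 0 + (x i) • e := (update_add_smul_single x i).symm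
        rw [hx, hR2]
        rw [hR]
        simp only []
        rw [hb x, sub_self]
      rw [hR] at this
      simp only [] at this
      have := sub_eq_zero.mp this
      rw [this, hF]
end Newton

section Main

variable {A B : Type*} [AddCommGroup A] [AddCommGroup B] {n : ℕ}

lemma update_zero_add (i : Fin n) (a b : Fin n → ℤ) :
    Function.update (a + b) i 0 = Function.update a i 0 + Function.update b i 0 := by
  funext j
  by_cases hj : j = i
  · subst hj; simp
  · simp [Function.update_apply, hj]

lemma update_add_single' {i i' : Fin n} (h : i' ≠ i) (x : Fin n → ℤ) :
    Function.update x i' 0 + Pi.single i (1 : ℤ) = Function.update (x + Pi.single i 1) i' 0 := by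
  funext j
  by_cases hj : j = i'
  · subst hj; simp [Pi.single_apply, h]
  · simp [Function.update_apply, hj]

lemma const_of_dep_empty (f : (Fin n → ℤ) → A)
    (h : ∀ (x : Fin n → ℤ) (i : Fin n), f (Function.update x i 0) = f x) :
    ∀ x, f x = f 0 := by
  classical
  have key : ∀ (u : Finset (Fin n)) (x : Fin n → ℤ),
      f (fun j => if j ∈ u then 0 else x j) = f x := by
    intro u
    induction u using Finset.induction_on with
    | empty => intro x; simp
    | insert a u hns ih =>
        intro x
        have : (fun j => if j ∈ insert a u then (0:ℤ) else x j)
            = Function.update (fun j => if j ∈ u then (0:ℤ) else x j) a 0 := by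
          funext j
          by_cases hj : j = a
          · subst hj; simp
          · simp [Function.update_apply, hj, Finset.mem_insert]
        rw [this, h, ih]
  intro x
  have := key Finset.univ x
  simp only [Finset.mem_univ, if_true] at this
  have h0 : (fun _ : Fin n => (0:ℤ)) = (0 : Fin n → ℤ) := rfl
  rw [h0] at this
  exact this.symm

theorem main_lift (π : B →+ A) (hπ : Function.Surjective π) :
    ∀ (s : Finset (Fin n)) (m : ℕ) (f : (Fin n → ℤ) → A), IsPolyMap m f →
      (∀ (x : Fin n → ℤ), ∀ i ∉ s, f (Function.update x i 0) = f x) →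
      ∃ g : (Fin n → ℤ) → B, IsPolyMap m g ∧ ∀ x, π (g x) = f x := by
  classical
  intro s
  induction s using Finset.induction_on with
  | empty =>
      intro m f hf hdep
      obtain ⟨b, hb⟩ := hπ (f 0)
      refine ⟨fun _ => b, IsPolyMap.const b, fun x => ?_⟩
      rw [hb, const_of_dep_empty f (fun x i => hdep x i (Finset.notMem_empty i)) x]
  | insert i s hi ih =>
      intro m f hf hdep
      set e : Fin n → ℤ := Pi.single i 1 with he
      set D : ((Fin n → ℤ) → A) → ((Fin n → ℤ) → A) := fun h => addDeriv h e with hD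
      set gj : ℕ → (Fin n → ℤ) → A := fun j x => (D^[j] f) (Function.update x i 0) with hgj
      -- dependence of iterated derivatives
      have hDdep0 : ∀ (j : ℕ) (x : Fin n → ℤ) (i' : Fin n), i' ≠ i → i' ∉ s →
          (D^[j] f) (Function.update x i' 0) = (D^[j] f) x := by
        intro j
        induction j with
        | zero =>
            intro x i' hne hns
            exact hdep x i' (by simp [Finset.mem_insert, hne, hns])
        | succ j ihj =>
            intro x i' hne hns
            rw [Function.iterate_succ_apply']
            show addDeriv (D^[j] f) e (Function.update x i' 0) = addDeriv (D^[j] f) e x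
            simp only [addDeriv]
            rw [update_add_single' hne, ihj _ i' hne hns, ihj _ i' hne hns]
      have hpoly : ∀ j ≤ m, IsPolyMap (m - j) (gj j) := by
        intro j hj
        have h1 : IsPolyMap (m - j) (D^[j] f) := by
          refine isPolyMap_iterate_addDeriv e j (m - j) f ?_
          rwa [show j + (m - j) = m by omega]
        exact h1.comp_additive (fun x => Function.update x i 0) (update_zero_add i)
      have hdep' : ∀ (j : ℕ) (x : Fin n → ℤ), ∀ i' ∉ s,
          gj j (Function.update x i' 0) = gj j x := by
        intro j x i' hns
        by_cases hne : i' = i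
        · subst hne
          rw [hgj]
          simp only [Function.update_idem]
        · rw [hgj]
          simp only []
          rw [Function.update_comm hne, hDdep0 j _ i' hne hns]
      have hlift : ∀ j : Fin (m + 1), ∃ h : (Fin n → ℤ) → B,
          IsPolyMap (m - j) h ∧ ∀ x, π (h x) = gj j x :=
        fun j => ih (m - j.val) (gj j) (hpoly j (by omega)) (hdep' j)
      choose hfun h1 h2 using hlift
      refine ⟨fun x => ∑ j : Fin (m + 1), Ring.choose (x i) (j : ℕ) • hfun j x, ?_, ?_⟩
      · refine IsPolyMap.sum Finset.univ _ (fun j _ => ?_)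
        have hc : IsPolyMap (j : ℕ) (fun x : Fin n → ℤ => Ring.choose (x i) (j : ℕ)) :=
          (isPolyMap_chFun (j : ℕ)).comp_additive (fun x : Fin n → ℤ => x i) (fun a b => rfl)
        have := hc.smul_mul (h1 j)
        rwa [show (j : ℕ) + (m - (j : ℕ)) = m by omega] at this
      · intro x
        rw [map_sum]
        have : ∀ j : Fin (m + 1), π (Ring.choose (x i) (j : ℕ) • hfun j x)
            = Ring.choose (x i) (j : ℕ) • gj j x := by
          intro j
          rw [map_zsmul, h2]
        rw [Finset.sum_congr rfl (fun j _ => this j)]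
        rw [Fin.sum_univ_eq_sum_range (fun j => Ring.choose (x i) j • gj j x) (m + 1)]
        exact (newton i m f hf x).symm

end Main

/-- Polynomial maps of degree at most  from  lift along surjective
homomorphisms of abelian groups. -/
theorem stmt_8 {A B : Type*} [AddCommGroup A] [AddCommGroup B]
    (π : B →+ A) (hπ : Function.Surjective π) (n k : ℕ)
    (f : (Fin n → ℤ) → A) (hf : IsPolyMap k f) :
    ∃ g : (Fin n → ℤ) → B, IsPolyMap k g ∧ ∀ x, π (g x) = f x :=
  main_lift π hπ Finset.univ k f hf
    (fun _ i hi => absurd (Finset.mem_univ i) hi)
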